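/- Let ℓ ≤ n, let S_ℓ ≤ S_n be the subgroup of permutations fixing each of ℓ+1,…,n, and let g ∈ S_n. Then there exists an irreducible complex character χ of S(g) = S_ℓ ∩ g S_ℓ g⁻¹ with ν₂(g,χ) ≠ 0 if and only if the double coset S_ℓ g S_ℓ contains an element σ with σ² = identity. -/

import Mathlib

open scoped BigOperators Pointwise Classical
open CategoryTheory

/-- For `H ≤ G` and `g ∈ G`, the stabilizer `S(g) = Stab_H(gH) = H ∩ gHg⁻¹`. -/
def stabCoset {G : Type*} [Group G] (H : Subgroup G) (g : G) : Subgroup G :=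
  H ⊓ Subgroup.map (MulAut.conj g).toMonoidHom H

/-- The `m`-th Frobenius–Schur indicator `ν_m(g,χ)` of the simple object of the
group-theoretical fusion category `C(G,H)` attached to `(g,χ)`:
`ν_m(g,χ) = (1/|S(g)|) Σ_{x ∈ H, (gx)^m ∈ H} conj(χ((gx)^m))`
(recall that for `x ∈ H`, `(gx)^m ∈ H` iff `(gx)^m ∈ S(g)`). -/
noncomputable def nuInd {G : Type*} [Group G] (H : Subgroup G) (g : G) (m : ℕ)
    (χ : ↥(stabCoset H g) → ℂ) : ℂ :=
  (Nat.card ↥(stabCoset H g) : ℂ)⁻¹ *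
    ∑ᶠ x : G, if h : x ∈ H ∧ (g * x) ^ m ∈ stabCoset H g
      then (starRingEnd ℂ) (χ ⟨(g * x) ^ m, h.2⟩) else 0

/-- The classical second Frobenius–Schur indicator `ν₂(θ) = (1/|K|) Σ_{x∈K} θ(x²)`. -/
noncomputable def fsInd {K : Type*} [Group K] (θ : K → ℂ) : ℂ :=
  (Nat.card K : ℂ)⁻¹ * ∑ᶠ x : K, θ (x ^ 2)

/-- The copy of `S_ℓ` inside `S_n`: permutations of `{1,…,n}` (0-indexed as `Fin n`)
fixing each of the points `ℓ+1,…,n` (0-indexed: the points with index `≥ ℓ`). -/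
def fixSubgroup (n ℓ : ℕ) : Subgroup (Equiv.Perm (Fin n)) where
  carrier := {σ | ∀ i : Fin n, ℓ ≤ (i : ℕ) → σ i = i}
  one_mem' := fun _ _ => rfl
  mul_mem' := by
    intro a b ha hb i hi
    simp only [Equiv.Perm.mul_apply, hb i hi, ha i hi]
  inv_mem' := by
    intro a ha i hi
    simp only [Set.mem_setOf_eq] at *
    exact (Equiv.symm_apply_eq a).mpr (ha i hi).symm

noncomputable def trivRep (K : Type) [Group K] : FDRep ℂ K :=
  FDRep.of (Representation.trivial ℂ (G := K) (V := ℂ))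

lemma trivRep_char (K : Type) [Group K] (s : K) : (trivRep K).character s = 1 := by
  show LinearMap.trace ℂ ℂ ((Representation.trivial ℂ (G := K) (V := ℂ)) s) = 1
  rw [show (Representation.trivial ℂ (G := K) (V := ℂ)) s = LinearMap.id from rfl]
  rw [LinearMap.trace_id]
  simp

instance trivRep_simple (K : Type) [Group K] : Simple (trivRep K) := by
  constructor
  intro Y f m
  constructor
  · intro hiso hf
    have h1 : inv f ≫ f = (𝟙 (trivRep K)) := by simp
    simp only [hf, Limits.comp_zero] at h1
    have h2 : (0 : ℂ) = 1 := congrArg (fun p : trivRep K ⟶ trivRep K => p.hom (1:ℂ)) h1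
    exact one_ne_zero h2.symm
  · intro hf
    have hinj : Function.Injective f.hom := by
      have : Mono ((forget₂ (FGModuleCat ℂ) (ModuleCat ℂ)).map ((Action.forget _ _).map f)) := by
        infer_instance
      exact (ModuleCat.mono_iff_injective _).mp this
    have hhom : ∃ y, (show ℂ from (f.hom.hom.hom : Y.V →ₗ[ℂ] ℂ) y) ≠ 0 := by
      by_contra h
      push_neg at h
      exact hf (by ext y; exact h y)
    obtain ⟨y, hy⟩ := hhom
    have hsurj : Function.Surjective f.hom := by
      intro z
      set c : ℂ := show ℂ from (f.hom.hom.hom : Y.V →ₗ[ℂ] ℂ) y with hc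
      refine ⟨((show ℂ from z) * c⁻¹) • y, ?_⟩
      show (show ℂ from (f.hom.hom.hom : Y.V →ₗ[ℂ] ℂ) (((show ℂ from z) * c⁻¹) • y)) = z
      rw [map_smul]
      show ((show ℂ from z) * c⁻¹) * c = _
      field_simp
    have : IsIso ((forget₂ (FGModuleCat ℂ) (ModuleCat ℂ)).map f.hom) := by
      exact (ConcreteCategory.isIso_iff_bijective _).mpr ⟨hinj, hsurj⟩
    have : IsIso f.hom := isIso_of_reflects_iso _ (forget₂ (FGModuleCat ℂ) (ModuleCat ℂ))
    infer_instance

lemma invol_of_sq_mem (n ℓ : ℕ) (y : Equiv.Perm (Fin n)) (hy : y ^ 2 ∈ fixSubgroup n ℓ) :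
    ∃ σ a : Equiv.Perm (Fin n), a ∈ fixSubgroup n ℓ ∧ σ ^ 2 = 1 ∧ y = a * σ := by
  have hy' : ∀ i : Fin n, ℓ ≤ (i : ℕ) → y (y i) = i := by
    intro i hi
    have := hy i hi
    rwa [sq, Equiv.Perm.mul_apply] at this
  have h3 : ∀ i : Fin n, ℓ ≤ ((y i : Fin n) : ℕ) → y (y i) = i := by
    intro i hi
    have := hy' (y i) hi
    exact y.injective this
  set f : Fin n → Fin n := fun i => if ℓ ≤ (i : ℕ) ∨ ℓ ≤ ((y i : Fin n) : ℕ) then y i else i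
    with hf
  have hinv : Function.Involutive f := by
    intro i
    by_cases hc : ℓ ≤ (i : ℕ) ∨ ℓ ≤ ((y i : Fin n) : ℕ)
    · have h1 : f i = y i := by rw [hf]; simp [hc]
      have hyy : y (y i) = i := by
        rcases hc with hc | hc
        · exact hy' i hc
        · exact h3 i hc
      have hc2 : ℓ ≤ ((y i : Fin n) : ℕ) ∨ ℓ ≤ ((y (y i) : Fin n) : ℕ) := by
        rcases hc with hc | hc
        · right; rw [hyy]; exact hc
        · left; exact hc
      rw [h1, hf]
      simp only [hc2, if_true]
      exact hyy
    · have h1 : f i = i := by rw [hf]; simp [hc]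
      rw [h1, h1]
  refine ⟨hinv.toPerm f, y * hinv.toPerm f, ?_, ?_, ?_⟩
  · intro i hi
    have hfi : f i = y i := by rw [hf]; simp [Or.inl hi]
    show y (f i) = i
    rw [hfi]
    exact hy' i hi
  · apply Equiv.ext
    intro i
    rw [sq, Equiv.Perm.mul_apply]
    show f (f i) = (1 : Equiv.Perm (Fin n)) i
    rw [hinv i]
    rfl
  · apply Equiv.ext
    intro i
    rw [Equiv.Perm.mul_apply, Equiv.Perm.mul_apply]
    show y i = y (f (f i))
    rw [hinv i]

/-- For `S_ℓ ⊆ S_n` and `g ∈ S_n`: there is an irreducible complex character `χ` of `S(g)`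
with `ν₂(g,χ) ≠ 0` if and only if the double coset `S_ℓ g S_ℓ` contains an involution
(an element squaring to the identity). -/
theorem stmt_12 (n ℓ : ℕ) (hl : ℓ ≤ n) (g : Equiv.Perm (Fin n)) :
    (∃ V : FDRep ℂ ↥(stabCoset (fixSubgroup n ℓ) g), Simple V ∧
      nuInd (fixSubgroup n ℓ) g 2 V.character ≠ 0) ↔
    (∃ σ : Equiv.Perm (Fin n),
      (∃ a ∈ fixSubgroup n ℓ, ∃ b ∈ fixSubgroup n ℓ, σ = a * g * b) ∧ σ ^ 2 = 1) := by
  set H := fixSubgroup n ℓ with hH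
  set S := stabCoset H g with hS
  constructor
  · rintro ⟨V, _, hnu⟩
    have hx : ∃ x : Equiv.Perm (Fin n), x ∈ H ∧ (g * x) ^ 2 ∈ S := by
      by_contra h
      push_neg at h
      apply hnu
      unfold nuInd
      rw [show (∑ᶠ x : Equiv.Perm (Fin n), if hc : x ∈ H ∧ (g * x) ^ 2 ∈ stabCoset H g
          then (starRingEnd ℂ) (V.character ⟨(g * x) ^ 2, hc.2⟩) else 0) = 0 from
        finsum_eq_zero_of_forall_eq_zero (fun x => dif_neg (fun hc => h x hc.1 hc.2))]
      rw [mul_zero]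
    obtain ⟨x, hxH, hxS⟩ := hx
    have hsq : (g * x) ^ 2 ∈ H := (Subgroup.mem_inf.mp hxS).1
    obtain ⟨σ, a, haH, hσ2, hy⟩ := invol_of_sq_mem n ℓ (g * x) hsq
    refine ⟨σ, ⟨a⁻¹, inv_mem haH, x, hxH, ?_⟩, hσ2⟩
    rw [mul_assoc, hy]
    group
  · rintro ⟨σ, ⟨a, haH, b, hbH, hab⟩, hσ2⟩
    set x : Equiv.Perm (Fin n) := b * a with hx
    have hxH : x ∈ H := mul_mem hbH haH
    have hσ2' : (a * g * b) * (a * g * b) = 1 := by rw [← hab, ← sq, hσ2]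
    have hkey : (g * x) ^ 2 = 1 := by
      rw [hx, sq]
      calc g * (b * a) * (g * (b * a)) = a⁻¹ * ((a * g * b) * (a * g * b)) * a := by group
        _ = 1 := by rw [hσ2']; group
    have hcond : x ∈ H ∧ (g * x) ^ 2 ∈ stabCoset H g := by
      refine ⟨hxH, ?_⟩
      rw [hkey]
      exact one_mem _
    refine ⟨trivRep ↥S, trivRep_simple _, ?_⟩
    unfold nuInd
    apply mul_ne_zero
    · rw [ne_eq, inv_eq_zero, Nat.cast_eq_zero]
      exact Nat.card_pos.ne'
    · rw [finsum_eq_sum_of_fintype]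
      have heq : ∀ y : Equiv.Perm (Fin n),
          (if hc : y ∈ H ∧ (g * y) ^ 2 ∈ stabCoset H g
            then (starRingEnd ℂ) ((trivRep ↥S).character ⟨(g * y) ^ 2, hc.2⟩) else 0) =
          (if (y ∈ H ∧ (g * y) ^ 2 ∈ stabCoset H g) then (1 : ℂ) else 0) := by
        intro y
        split_ifs with hc
        · rw [trivRep_char]; simp
        · rfl
      rw [Finset.sum_congr rfl (fun y _ => heq y)]
      rw [Finset.sum_boole]
      rw [ne_eq, Nat.cast_eq_zero, Finset.card_eq_zero, ← ne_eq]
      apply Finset.nonempty_iff_ne_empty.mp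
      exact ⟨x, by simpa using hcond⟩
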